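/- Let μ, ν, η be Borel probability measures on ℝ whose supports are bounded above. If μ ∗ η ≥₁ ν ∗ η, then sup(supp μ) ≥ sup(supp ν). -/

import Mathlib

open MeasureTheory ProbabilityTheory
open scoped ENNReal

/-- `μ` first-order stochastically dominates `ν`: the CDF of `μ` lies below that of `ν`. -/
def FSD (μ ν : Measure ℝ) : Prop := ∀ t : ℝ, cdf μ t ≤ cdf ν t

/-- The (topological) support of a measure on `ℝ`: points all of whose neighborhoods have
positive measure. -/
def msupport (μ : Measure ℝ) : Set ℝ := {x | ∀ U ∈ nhds x, μ U ≠ 0}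

lemma msupport_compl_null (μ : Measure ℝ) : μ (msupport μ)ᶜ = 0 := by
  apply measure_null_of_locally_null
  intro x hx
  simp only [msupport, Set.mem_compl_iff, Set.mem_setOf_eq, not_forall] at hx
  obtain ⟨U, hU, hU0⟩ := hx
  exact ⟨U, nhdsWithin_le_nhds hU, by simpa using hU0⟩

lemma msupport_nonempty (μ : Measure ℝ) [IsProbabilityMeasure μ] :
    (msupport μ).Nonempty := by
  by_contra hne
  rw [Set.not_nonempty_iff_eq_empty] at hne
  have := msupport_compl_null μ
  rw [hne, Set.compl_empty] at this
  simpa [this] using (measure_univ (μ := μ))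

lemma measure_Ioi_sSup (μ : Measure ℝ) (hb : BddAbove (msupport μ)) :
    μ (Set.Ioi (sSup (msupport μ))) = 0 := by
  refine measure_mono_null ?_ (msupport_compl_null μ)
  intro x hx hxs
  exact absurd (le_csSup hb hxs) (not_le.mpr hx)

lemma measure_Ioi_lt_sSup (μ : Measure ℝ) [IsProbabilityMeasure μ]
    {u : ℝ} (hu : u < sSup (msupport μ)) : μ (Set.Ioi u) ≠ 0 := by
  obtain ⟨x, hx, hxu⟩ := exists_lt_of_lt_csSup (msupport_nonempty μ) hu
  exact fun h0 => hx (Set.Ioi u) (isOpen_Ioi.mem_nhds hxu) h0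

theorem stmt_15 (μ ν η : Measure ℝ) [IsProbabilityMeasure μ] [IsProbabilityMeasure ν]
    [IsProbabilityMeasure η]
    (hμ : BddAbove (msupport μ)) (hν : BddAbove (msupport ν)) (hη : BddAbove (msupport η))
    (h : FSD (μ.conv η) (ν.conv η)) :
    sSup (msupport ν) ≤ sSup (msupport μ) := by
  set a := sSup (msupport μ)
  set b := sSup (msupport ν)
  set c := sSup (msupport η)
  by_contra hab
  push_neg at hab
  set t : ℝ := a + c + (b - a) / 2 with ht
  have hadd : Measurable fun p : ℝ × ℝ => p.1 + p.2 := measurable_fst.add measurable_snd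
  have hμη : (μ.conv η) (Set.Ioi t) = 0 := by
    rw [Measure.conv, Measure.map_apply hadd measurableSet_Ioi]
    have hsub : (fun p : ℝ × ℝ => p.1 + p.2) ⁻¹' Set.Ioi t ⊆
        (Set.Ioi a ×ˢ Set.univ) ∪ (Set.univ ×ˢ Set.Ioi c) := by
      intro p hp
      simp only [Set.mem_preimage, Set.mem_Ioi] at hp
      by_contra hcon
      simp only [Set.mem_union, Set.mem_prod, Set.mem_Ioi, Set.mem_univ, and_true, true_and,
        not_or, not_lt] at hcon
      have h1 : p.1 + p.2 ≤ a + c := add_le_add hcon.1 hcon.2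
      have htac : a + c ≤ t := by rw [ht]; nlinarith
      linarith
    have hnull : (μ.prod η) ((Set.Ioi a ×ˢ Set.univ) ∪ (Set.univ ×ˢ Set.Ioi c)) = 0 := by
      refine measure_union_null ?_ ?_ <;> rw [Measure.prod_prod] <;>
        simp [a, c, measure_Ioi_sSup μ hμ, measure_Ioi_sSup η hη]
    exact measure_mono_null hsub hnull
  have hcdf1 : cdf (μ.conv η) t = 1 := by
    rw [cdf_eq_real, measureReal_def]
    have : (μ.conv η) (Set.Iic t) = 1 := by
      have := measure_add_measure_compl (μ := μ.conv η) (measurableSet_Iic (a := t))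
      rw [Set.compl_Iic, hμη, add_zero, measure_univ] at this
      exact this
    simp [this]
  have hle := h t
  rw [hcdf1] at hle
  have hcdf_le : cdf (ν.conv η) t ≤ 1 := cdf_le_one _ t
  have heq : cdf (ν.conv η) t = 1 := le_antisymm hcdf_le hle
  have hIic : (ν.conv η) (Set.Iic t) = 1 := by
    rw [← ofReal_cdf, heq]; simp
  have hIoi : (ν.conv η) (Set.Ioi t) = 0 := by
    have h2 := measure_add_measure_compl (μ := ν.conv η) (measurableSet_Iic (a := t))
    rw [Set.compl_Iic, hIic, measure_univ] at h2
    have h3 : (1:ℝ≥0∞) + (ν.conv η) (Set.Ioi t) = 1 + 0 := by rw [add_zero]; exact h2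
    exact (ENNReal.add_right_inj ENNReal.one_ne_top).mp h3
  -- but (ν.conv η) (Set.Ioi t) > 0 since t < b + c
  have hε : (0:ℝ) < (b - a) / 4 := by linarith
  have hpos : (ν.conv η) (Set.Ioi t) ≠ 0 := by
    rw [Measure.conv, Measure.map_apply hadd measurableSet_Ioi]
    have hsub : (Set.Ioi (b - (b - a)/4) ×ˢ Set.Ioi (c - (b - a)/4)) ⊆
        (fun p : ℝ × ℝ => p.1 + p.2) ⁻¹' Set.Ioi t := by
      rintro ⟨x, y⟩ ⟨hx, hy⟩
      simp only [Set.mem_Ioi] at hx hy ⊢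
      simp only [Set.mem_preimage, Set.mem_Ioi]
      rw [ht]; nlinarith
    intro h0
    have := measure_mono_null hsub h0
    rw [Measure.prod_prod] at this
    rcases mul_eq_zero.mp this with h1 | h1
    · exact measure_Ioi_lt_sSup ν (by linarith) h1
    · exact measure_Ioi_lt_sSup η (by linarith) h1
  exact hpos hIoi
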